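/- Let R be a 2×2 correlation matrix [[1, ρ],[ρ, 1]]. Then tr(R^{1/2}) = √(1+ρ) + √(1−ρ), and the normalized Bures-Wasserstein dependence D₁ between the two univariate components equals (2 − √(1−ρ) − √(1+ρ))/(2 − √2), which is 0 iff ρ = 0 and 1 iff |ρ| = 1, and is monotone increasing in |ρ|. -/

import Mathlib

open Matrix
open scoped MatrixOrder

/-- The positive semidefinite square root `A^{1/2}` of a matrix
(junk value `0` if `A` is not positive semidefinite). -/
noncomputable def msqrt {n : Type*} [Fintype n] [DecidableEq n]
    (A : Matrix n n ℝ) : Matrix n n ℝ := by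
  classical exact if h : A.PosSemidef then
    (h.1.eigenvectorUnitary : Matrix n n ℝ) * diagonal (((↑) : ℝ → ℝ) ∘ (Real.sqrt ·) ∘ h.1.eigenvalues) *
      (star h.1.eigenvectorUnitary : Matrix n n ℝ) else 0

/-- The squared Bures-Wasserstein distance
`d_W²(R, S) = tr R + tr S − 2 tr((R^{1/2} S R^{1/2})^{1/2})`. -/
noncomputable def dWsq {n : Type*} [Fintype n] [DecidableEq n]
    (R S : Matrix n n ℝ) : ℝ :=
  R.trace + S.trace - 2 * (msqrt (msqrt R * S * msqrt R)).trace

/-- The normalized Bures-Wasserstein dependence coefficient `D₁` between the two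
components of a bivariate Gaussian copula with correlation `ρ` :
`D₁ = d_W²(R, I₂) / (4 − 2√2)` (the denominator being `d_W²(R_m, I₂)` for the all-ones
matrix `R_m`, and the marginal terms vanishing since `d_i = 1`). -/
noncomputable def D1biv (ρ : ℝ) : ℝ :=
  dWsq !![1, ρ; ρ, 1] (1 : Matrix (Fin 2) (Fin 2) ℝ) / (4 - 2 * Real.sqrt 2)

/-- A symmetric 2×2 matrix with diagonal `a` and off-diagonal `b`, `|b| ≤ a`, is PSD. -/
lemma psd_symm2 (a b : ℝ) (h : |b| ≤ a) : (!![a,b;b,a]).PosSemidef := by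
  rw [Matrix.posSemidef_iff_dotProduct_mulVec]
  constructor
  · ext i j; fin_cases i <;> fin_cases j <;> simp [Matrix.conjTranspose_apply]
  · intro x
    have hx := abs_le.mp h
    simp only [dotProduct, mulVec, Fin.sum_univ_two, RCLike.re_to_real]
    simp [Matrix.cons_val_zero, Matrix.cons_val_one]
    nlinarith [sq_nonneg (x 0 + x 1), sq_nonneg (x 0 - x 1), hx.1, hx.2]

/-- Trace of the square root and value of `D₁` for the bivariate correlation matrix. -/
lemma D1biv_key (ρ : ℝ) (h : |ρ| ≤ 1) :
    (msqrt !![1, ρ; ρ, 1]).trace = Real.sqrt (1 + ρ) + Real.sqrt (1 - ρ) ∧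
    D1biv ρ = (2 - Real.sqrt (1 - ρ) - Real.sqrt (1 + ρ)) / (2 - Real.sqrt 2) := by
  obtain ⟨h1, h2⟩ := abs_le.mp h
  set s1 := Real.sqrt (1 + ρ) with hs1
  set s2 := Real.sqrt (1 - ρ) with hs2
  have hs1n : 0 ≤ s1 := Real.sqrt_nonneg _
  have hs2n : 0 ≤ s2 := Real.sqrt_nonneg _
  have hsq1 : s1 ^ 2 = 1 + ρ := Real.sq_sqrt (by linarith)
  have hsq2 : s2 ^ 2 = 1 - ρ := Real.sq_sqrt (by linarith)
  set a := (s1 + s2) / 2 with ha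
  set b := (s1 - s2) / 2 with hb
  have hB : (!![a,b;b,a]).PosSemidef := by
    apply psd_symm2
    rw [abs_le]; constructor <;> [skip; skip] <;> simp [ha, hb] <;> linarith
  have hBB : (!![a,b;b,a]) ^ 2 = !![1, ρ; ρ, 1] := by
    ext i j
    fin_cases i <;> fin_cases j <;>
      simp [pow_two, Matrix.mul_apply, Fin.sum_univ_two, ha, hb] <;> nlinarith [hsq1, hsq2]
  have hR : (!![1, ρ; ρ, 1] : Matrix (Fin 2) (Fin 2) ℝ).PosSemidef := hBB ▸ hB.pow 2
  have hmsq : msqrt !![1, ρ; ρ, 1] = !![a,b;b,a] := by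
    unfold msqrt
    rw [dif_pos hR]
    have hc := hR.1.cfc_eq Real.sqrt
    rw [IsHermitian.cfc, Unitary.conjStarAlgAut_apply] at hc
    refine Eq.trans hc.symm ?_
    rw [← cfcₙ_eq_cfc (hf0 := Real.sqrt_zero), ← CFC.sqrt_eq_real_sqrt _ hR.nonneg]
    exact CFC.sqrt_unique (by rw [← pow_two, hBB]) hB.nonneg
  have htr : (msqrt !![1, ρ; ρ, 1]).trace = s1 + s2 := by
    rw [hmsq, Matrix.trace_fin_two]
    show a + a = s1 + s2
    rw [ha]; ring
  refine ⟨htr, ?_⟩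
  have hmid : msqrt (msqrt !![1, ρ; ρ, 1] * 1 * msqrt !![1, ρ; ρ, 1]) = !![a,b;b,a] := by
    rw [hmsq, mul_one, ← pow_two, hBB, hmsq]
  have hd : dWsq !![1, ρ; ρ, 1] (1 : Matrix (Fin 2) (Fin 2) ℝ) = 4 - 2 * (s1 + s2) := by
    rw [dWsq, hmid]
    simp [Matrix.trace_fin_two, ha]
    ring
  rw [D1biv, hd]
  rw [show (4 : ℝ) - 2 * (s1 + s2) = 2 * (2 - s2 - s1) by ring,
      show (4 : ℝ) - 2 * Real.sqrt 2 = 2 * (2 - Real.sqrt 2) by ring,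
      mul_div_mul_left _ _ (by norm_num : (2:ℝ) ≠ 0)]

lemma sum_sqrt_eq (ρ : ℝ) (h1 : -1 ≤ ρ) (h2 : ρ ≤ 1) :
    Real.sqrt (1+ρ) + Real.sqrt (1-ρ)
      = Real.sqrt (2 + 2 * Real.sqrt ((1+ρ)*(1-ρ))) := by
  have hm : Real.sqrt (1+ρ) * Real.sqrt (1-ρ) = Real.sqrt ((1+ρ)*(1-ρ)) :=
    (Real.sqrt_mul (by linarith) _).symm
  have a1 := Real.sq_sqrt (show (0:ℝ) ≤ 1+ρ by linarith)
  have a2 := Real.sq_sqrt (show (0:ℝ) ≤ 1-ρ by linarith)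
  rw [← Real.sqrt_sq (by positivity : (0:ℝ) ≤ Real.sqrt (1+ρ) + Real.sqrt (1-ρ))]
  congr 1
  linear_combination a1 + a2 + 2*hm

lemma sum_sqrt_iffs (ρ : ℝ) (h1 : -1 ≤ ρ) (h2 : ρ ≤ 1) :
    (Real.sqrt (1+ρ) + Real.sqrt (1-ρ) = 2 ↔ ρ = 0) ∧
    (Real.sqrt (1+ρ) + Real.sqrt (1-ρ) = Real.sqrt 2 ↔ |ρ| = 1) := by
  rw [sum_sqrt_eq ρ h1 h2]
  have hp : (0:ℝ) ≤ (1+ρ)*(1-ρ) := by nlinarith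
  have ht : (0:ℝ) ≤ Real.sqrt ((1+ρ)*(1-ρ)) := Real.sqrt_nonneg _
  constructor
  · rw [Real.sqrt_eq_iff_eq_sq (by linarith) (by norm_num)]
    norm_num
    constructor
    · intro hh
      have h4 : Real.sqrt ((1+ρ)*(1-ρ)) = Real.sqrt 1 := by rw [Real.sqrt_one]; linarith
      rw [Real.sqrt_inj hp (by norm_num)] at h4
      have : ρ^2 = 0 := by nlinarith
      exact pow_eq_zero_iff (by norm_num) |>.mp this
    · rintro rfl; norm_num
  · rw [Real.sqrt_eq_iff_eq_sq (by linarith) (Real.sqrt_nonneg 2),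
        Real.sq_sqrt (by norm_num : (0:ℝ) ≤ 2)]
    constructor
    · intro hh
      have h4 : Real.sqrt ((1+ρ)*(1-ρ)) = Real.sqrt 0 := by rw [Real.sqrt_zero]; linarith
      rw [Real.sqrt_inj hp le_rfl] at h4
      rcases mul_eq_zero.mp h4 with hc | hc
      · rw [abs_eq (by norm_num : (0:ℝ) ≤ 1)]; right; linarith
      · rw [abs_eq (by norm_num : (0:ℝ) ≤ 1)]; left; linarith
    · intro hh
      rcases (abs_eq (by norm_num : (0:ℝ) ≤ 1)).mp hh with rfl | rfl <;> norm_num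

lemma sum_sqrt_anti (ρ σ : ℝ) (hrs : |ρ| ≤ |σ|) (hσ : |σ| ≤ 1) :
    Real.sqrt (1+σ) + Real.sqrt (1-σ) ≤ Real.sqrt (1+ρ) + Real.sqrt (1-ρ) := by
  have hρ : |ρ| ≤ 1 := hrs.trans hσ
  obtain ⟨hσ1, hσ2⟩ := abs_le.mp hσ
  obtain ⟨hρ1, hρ2⟩ := abs_le.mp hρ
  rw [sum_sqrt_eq ρ hρ1 hρ2, sum_sqrt_eq σ hσ1 hσ2]
  apply Real.sqrt_le_sqrt
  have hsq : ρ^2 ≤ σ^2 := by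
    rw [← sq_abs ρ, ← sq_abs σ]; exact pow_le_pow_left₀ (abs_nonneg _) hrs 2
  have : (1+σ)*(1-σ) ≤ (1+ρ)*(1-ρ) := by nlinarith
  nlinarith [Real.sqrt_le_sqrt this]

/-- For `R = [[1,ρ],[ρ,1]]` with `|ρ| ≤ 1` : `tr(R^{1/2}) = √(1+ρ) + √(1−ρ)`, the
normalized dependence is `D₁ = (2 − √(1−ρ) − √(1+ρ))/(2 − √2)`, which is `0` iff
`ρ = 0`, `1` iff `|ρ| = 1`, and is monotone increasing in `|ρ|`. -/
theorem D1biv_spec :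
    (∀ ρ : ℝ, |ρ| ≤ 1 →
        (msqrt !![1, ρ; ρ, 1]).trace = Real.sqrt (1 + ρ) + Real.sqrt (1 - ρ) ∧
          D1biv ρ = (2 - Real.sqrt (1 - ρ) - Real.sqrt (1 + ρ)) / (2 - Real.sqrt 2) ∧
          (D1biv ρ = 0 ↔ ρ = 0) ∧ (D1biv ρ = 1 ↔ |ρ| = 1)) ∧
      ∀ ρ σ : ℝ, |ρ| ≤ |σ| → |σ| ≤ 1 → D1biv ρ ≤ D1biv σ := by
  have hden : (0:ℝ) < 2 - Real.sqrt 2 := by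
    nlinarith [Real.sq_sqrt (by norm_num : (0:ℝ) ≤ 2), Real.sqrt_nonneg 2]
  constructor
  · intro ρ h
    obtain ⟨h1, h2⟩ := abs_le.mp h
    obtain ⟨htr, hD⟩ := D1biv_key ρ h
    obtain ⟨hiff1, hiff2⟩ := sum_sqrt_iffs ρ h1 h2
    refine ⟨htr, hD, ?_, ?_⟩
    · rw [hD, div_eq_zero_iff, or_iff_left hden.ne']
      rw [← hiff1]
      constructor <;> intro hh <;> linarith
    · rw [hD, div_eq_one_iff_eq hden.ne']
      rw [← hiff2]
      constructor <;> intro hh <;> linarith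
  · intro ρ σ hrs hσ
    have hρ : |ρ| ≤ 1 := hrs.trans hσ
    rw [(D1biv_key ρ hρ).2, (D1biv_key σ hσ).2]
    rw [div_le_div_iff_of_pos_right hden]
    have := sum_sqrt_anti ρ σ hrs hσ
    linarith
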